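/- For every integer n ≥ 1, let Γ_n be the digraph on vertices v_1,…,v_n,u_1,…,u_n with edges: v_i → v_{i+1} (indices mod n), u_{i+1} → u_i (indices mod n), and both v_i → u_i and u_i → v_i for all i. Then Γ_n is 2-regular, strongly connected, and has diameter ⌊n/2⌋ + 1. -/

import Mathlib

open Set

namespace PaperDRD

variable {V : Type*}

def HasWalk (E : V → V → Prop) (u v : V) (n : ℕ) : Prop :=
  ∃ f : Fin (n + 1) → V, f 0 = u ∧ f (Fin.last n) = v ∧
    ∀ i : Fin n, E (f i.castSucc) (f i.succ)

def StronglyConnected (E : V → V → Prop) : Prop :=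
  ∀ u v : V, ∃ n : ℕ, HasWalk E u v n

noncomputable def ddist (E : V → V → Prop) (u v : V) : ℕ :=
  sInf {n : ℕ | HasWalk E u v n}

noncomputable def girth (E : V → V → Prop) : ℕ :=
  sInf {n : ℕ | 0 < n ∧ ∃ u : V, HasWalk E u u n}

noncomputable def diam [Fintype V] (E : V → V → Prop) : ℕ :=
  Finset.univ.sup fun p : V × V => ddist E p.1 p.2

noncomputable def outDeg (E : V → V → Prop) (x : V) : ℕ := {y : V | E x y}.ncard

noncomputable def inDeg (E : V → V → Prop) (x : V) : ℕ := {y : V | E y x}.ncard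

def IsRegular (E : V → V → Prop) (k : ℕ) : Prop :=
  ∀ x : V, outDeg E x = k ∧ inDeg E x = k

def DelEdges (E : V → V → Prop) (F : Set (V × V)) : V → V → Prop :=
  fun a b => E a b ∧ (a, b) ∉ F

def IsEdgeCut (E : V → V → Prop) (F : Set (V × V)) : Prop :=
  (∀ e ∈ F, E e.1 e.2) ∧ ¬ StronglyConnected (DelEdges E F)

noncomputable def edgeConnectivity (E : V → V → Prop) : ℕ :=
  sInf {n : ℕ | ∃ F : Set (V × V), IsEdgeCut E F ∧ F.ncard = n}

def IsMinEdgeCut (E : V → V → Prop) (F : Set (V × V)) : Prop :=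
  IsEdgeCut E F ∧ F.ncard = edgeConnectivity E

def outStar (E : V → V → Prop) (x : V) : Set (V × V) := {e : V × V | e.1 = x ∧ E x e.2}

def inStar (E : V → V → Prop) (x : V) : Set (V × V) := {e : V × V | e.2 = x ∧ E e.1 x}

def IsDRDigraph (E : V → V → Prop) (k : ℕ) : Prop :=
  Irreflexive E ∧ IsRegular E k ∧ StronglyConnected E ∧
    ∀ (i m : ℕ) (u v u' v' : V), 1 ≤ m → ddist E u v = m → ddist E u' v' = m →
      {w : V | ddist E u w = i ∧ E v w}.ncard = {w : V | ddist E u' w = i ∧ E v' w}.ncard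

def IsSRDigraph (E : V → V → Prop) (n k t lam mu : ℕ) : Prop :=
  Irreflexive E ∧ Nat.card V = n ∧ IsRegular E k ∧ StronglyConnected E ∧
    (∀ u : V, {w : V | E u w ∧ E w u}.ncard = t) ∧
    (∀ u v : V, u ≠ v → E u v → {w : V | E u w ∧ E w v}.ncard = lam) ∧
    (∀ u v : V, u ≠ v → ¬ E u v → {w : V | E u w ∧ E w v}.ncard = mu)

def IsUndirectedCycleN (E : V → V → Prop) (n : ℕ) : Prop :=
  ∃ e : V ≃ ZMod n, ∀ a b : V, E a b ↔ (e b = e a + 1 ∨ e a = e b + 1)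

def IsUndirectedCycle (E : V → V → Prop) : Prop :=
  ∃ n : ℕ, 3 ≤ n ∧ IsUndirectedCycleN E n

section Aux

open Fin.CommRing Fin.NatCast

set_option linter.unusedSectionVars false

variable {n : ℕ} [NeZero n]

private theorem val_sub'' (a b : Fin n) : ((a-b).val) = (n - b.val + a.val) % n := by
  rw [Fin.sub_def]

private theorem val_add1'' (a : Fin n) : ((a+1).val) = (a.val + 1 % n) % n := by
  rw [Fin.add_def, Fin.val_one' n]

private theorem sub_val (a b : Fin n) :
    (a - b).val = if b.val ≤ a.val then a.val - b.val else a.val + n - b.val := by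
  have ha := a.isLt; have hb := b.isLt
  rw [val_sub'']
  rcases Nat.eq_zero_or_pos b.val with h | h
  · rw [h]; simp only [Nat.sub_zero]
    rw [Nat.add_comm, Nat.add_mod_right, Nat.mod_eq_of_lt ha]
    simp
  · split <;> rename_i hc
    · have : n - b.val + a.val = (a.val - b.val) + n := by omega
      rw [this, Nat.add_mod_right, Nat.mod_eq_of_lt (by omega)]
    · rw [Nat.mod_eq_of_lt (by omega)]; omega

private theorem add_one_val (a : Fin n) :
    (a + 1).val = if a.val + 1 = n then 0 else a.val + 1 := by
  have ha := a.isLt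
  rw [val_add1'']
  rcases Nat.eq_or_lt_of_le (Nat.one_le_iff_ne_zero.mpr (NeZero.ne n)) with h | h
  · have ha0 : a.val = 0 := by omega
    subst h; simp [ha0]
  · rw [Nat.mod_eq_of_lt h]
    split <;> rename_i hc
    · rw [hc]; simp
    · rw [Nat.mod_eq_of_lt (by omega)]

private theorem neg_val (a : Fin n) : (-a).val = if a.val = 0 then 0 else n - a.val := by
  have : (-a) = 0 - a := by ring
  rw [this, sub_val]
  simp only [Fin.val_zero]
  by_cases h : a.val = 0 <;> simp [h] <;> omega

/-- The explicit distance function on `Γ_n`. -/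
def Dfun (n : ℕ) [NeZero n] : (Fin n ⊕ Fin n) → (Fin n ⊕ Fin n) → ℕ
  | Sum.inl i, Sum.inl j => min (j - i).val ((i - j).val + 2)
  | Sum.inl i, Sum.inr j => min (j - i).val (i - j).val + 1
  | Sum.inr i, Sum.inl j => min (j - i).val (i - j).val + 1
  | Sum.inr i, Sum.inr j => min (i - j).val ((j - i).val + 2)

private theorem keyG1 (c : Fin n) :
    min (c+1).val ((-(c+1)).val + 2) ≤ min c.val ((-c).val + 2) + 1 := by
  have h1 := c.isLt
  rw [neg_val, neg_val, add_one_val]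
  split <;> split <;> split <;> omega

private theorem keyG2 (c : Fin n) :
    min c.val (-c).val ≤ min (c+1).val (-(c+1)).val + 1 := by
  have h1 := c.isLt
  rw [neg_val, neg_val, add_one_val]
  split <;> split <;> split <;> omega

private theorem keyG3 (c : Fin n) :
    min (c+1).val (-(c+1)).val ≤ min c.val (-c).val + 1 := by
  have h1 := c.isLt
  rw [neg_val, neg_val, add_one_val]
  split <;> split <;> split <;> omega

private theorem boundD1 (c : Fin n) : min c.val ((-c).val + 2) ≤ n/2 + 1 := by
  have h1 := c.isLt
  have h2 : 1 ≤ n := Nat.one_le_iff_ne_zero.mpr (NeZero.ne n)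
  rw [neg_val]; split <;> omega

private theorem boundD2 (c : Fin n) : min c.val (-c).val + 1 ≤ n/2 + 1 := by
  have h1 := c.isLt
  have h2 : 1 ≤ n := Nat.one_le_iff_ne_zero.mpr (NeZero.ne n)
  rw [neg_val]; split <;> omega

private theorem walk_refl (E : V → V → Prop) (x : V) : HasWalk E x x 0 :=
  ⟨fun _ => x, rfl, rfl, fun i => i.elim0⟩

private theorem walk_snoc {E : V → V → Prop} {x y z : V} {m : ℕ}
    (h : HasWalk E x y m) (e : E y z) : HasWalk E x z (m + 1) := by
  obtain ⟨f, h0, hl, he⟩ := h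
  refine ⟨Fin.snoc f z, ?_, ?_, ?_⟩
  · rw [show (0 : Fin (m+2)) = Fin.castSucc 0 by rfl, Fin.snoc_castSucc, h0]
  · simp [Fin.snoc_last]
  · intro i
    refine Fin.lastCases ?_ ?_ i
    · rw [Fin.snoc_castSucc, hl, Fin.succ_last, Fin.snoc_last]
      exact e
    · intro j
      rw [Fin.snoc_castSucc, Fin.succ_castSucc, Fin.snoc_castSucc]
      exact he j

private theorem walk_cons {E : V → V → Prop} {x y z : V} {m : ℕ}
    (e : E x y) (h : HasWalk E y z m) : HasWalk E x z (m + 1) := by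
  obtain ⟨f, h0, hl, he⟩ := h
  refine ⟨Fin.cons x f, rfl, ?_, ?_⟩
  · rw [show (Fin.last (m+1)) = Fin.succ (Fin.last m) by rfl, Fin.cons_succ, hl]
  · intro i
    refine Fin.cases ?_ ?_ i
    · rw [show ((0 : Fin (m+1)).castSucc) = (0 : Fin (m+2)) by rfl]
      rw [show ((0 : Fin (m+1)).succ) = Fin.succ (0 : Fin (m+1)) by rfl]
      rw [Fin.cons_succ, h0]
      exact e
    · intro j
      rw [← Fin.succ_castSucc, Fin.cons_succ, Fin.cons_succ]
      exact he j

private theorem walk_init {E : V → V → Prop} {x y : V} {m : ℕ}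
    (h : HasWalk E x y (m + 1)) : ∃ w, HasWalk E x w m ∧ E w y := by
  obtain ⟨f, h0, hl, he⟩ := h
  refine ⟨f (Fin.last m).castSucc, ⟨fun i => f i.castSucc, ?_, rfl, ?_⟩, ?_⟩
  · show f (0 : Fin (m+1)).castSucc = x
    rw [show ((0 : Fin (m+1)).castSucc) = (0 : Fin (m+2)) by rfl, h0]
  · intro j
    show E (f j.castSucc.castSucc) (f j.succ.castSucc)
    rw [← Fin.succ_castSucc]
    exact he j.castSucc
  · have := he (Fin.last m)
    rwa [Fin.succ_last, hl] at this

private theorem walk_zero {E : V → V → Prop} {x y : V}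
    (h : HasWalk E x y 0) : x = y := by
  obtain ⟨f, h0, hl, _⟩ := h
  rw [← h0, ← hl]; rfl

end Aux

open Fin.CommRing Fin.NatCast in
theorem stmt15 (n : ℕ) [NeZero n] (hn : 1 ≤ n)
    (E : (Fin n ⊕ Fin n) → (Fin n ⊕ Fin n) → Prop)
    (hE : ∀ a b : Fin n,
      (E (Sum.inl a) (Sum.inl b) ↔ b = a + 1) ∧
      (E (Sum.inr a) (Sum.inr b) ↔ a = b + 1) ∧
      (E (Sum.inl a) (Sum.inr b) ↔ a = b) ∧
      (E (Sum.inr a) (Sum.inl b) ↔ a = b)) :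
    IsRegular E 2 ∧ StronglyConnected E ∧ diam E = n / 2 + 1 := by
  -- basic edges
  have eLL : ∀ a : Fin n, E (Sum.inl a) (Sum.inl (a+1)) := fun a => (hE a (a+1)).1.mpr rfl
  have eRR : ∀ a : Fin n, E (Sum.inr a) (Sum.inr (a-1)) := fun a =>
    (hE a (a-1)).2.1.mpr (by ring)
  have eLR : ∀ a : Fin n, E (Sum.inl a) (Sum.inr a) := fun a => (hE a a).2.2.1.mpr rfl
  have eRL : ∀ a : Fin n, E (Sum.inr a) (Sum.inl a) := fun a => (hE a a).2.2.2.mpr rfl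
  -- walks along the two cycles
  have vwalk : ∀ (i : Fin n) (d : ℕ), HasWalk E (Sum.inl i) (Sum.inl (i + (d : Fin n))) d := by
    intro i d
    induction d with
    | zero => simpa using walk_refl E (Sum.inl i)
    | succ d ih =>
      have e : E (Sum.inl (i + (d : Fin n))) (Sum.inl (i + ((d+1 : ℕ) : Fin n))) := by
        refine (hE _ _).1.mpr ?_
        push_cast
        ring
      exact walk_snoc ih e
  have uwalk : ∀ (i : Fin n) (d : ℕ), HasWalk E (Sum.inr i) (Sum.inr (i - (d : Fin n))) d := by
    intro i d
    induction d with
    | zero => simpa using walk_refl E (Sum.inr i)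
    | succ d ih =>
      have e : E (Sum.inr (i - (d : Fin n))) (Sum.inr (i - ((d+1 : ℕ) : Fin n))) := by
        refine (hE _ _).2.1.mpr ?_
        push_cast
        ring
      exact walk_snoc ih e
  -- existence of walks of length Dfun
  have exwalk : ∀ x y, HasWalk E x y (Dfun n x y) := by
    rintro (i | i) (j | j)
    · show HasWalk E _ _ (min (j - i).val ((i - j).val + 2))
      rcases le_total (j - i).val ((i - j).val + 2) with h | h
      · rw [min_eq_left h]
        have w := vwalk i (j - i).val
        rwa [show i + (((j - i).val : ℕ) : Fin n) = j by
          rw [Fin.cast_val_eq_self]; ring] at w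
      · rw [min_eq_right h]
        have w := uwalk i (i - j).val
        rw [show i - (((i - j).val : ℕ) : Fin n) = j by
          rw [Fin.cast_val_eq_self]; ring] at w
        exact walk_cons (eLR i) (walk_snoc w (eRL j))
    · show HasWalk E _ _ (min (j - i).val (i - j).val + 1)
      rcases le_total (j - i).val (i - j).val with h | h
      · rw [min_eq_left h]
        have w := vwalk i (j - i).val
        rw [show i + (((j - i).val : ℕ) : Fin n) = j by
          rw [Fin.cast_val_eq_self]; ring] at w
        exact walk_snoc w (eLR j)
      · rw [min_eq_right h]
        have w := uwalk i (i - j).val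
        rw [show i - (((i - j).val : ℕ) : Fin n) = j by
          rw [Fin.cast_val_eq_self]; ring] at w
        exact walk_cons (eLR i) w
    · show HasWalk E _ _ (min (j - i).val (i - j).val + 1)
      rcases le_total (j - i).val (i - j).val with h | h
      · rw [min_eq_left h]
        have w := vwalk i (j - i).val
        rw [show i + (((j - i).val : ℕ) : Fin n) = j by
          rw [Fin.cast_val_eq_self]; ring] at w
        exact walk_cons (eRL i) w
      · rw [min_eq_right h]
        have w := uwalk i (i - j).val
        rw [show i - (((i - j).val : ℕ) : Fin n) = j by
          rw [Fin.cast_val_eq_self]; ring] at w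
        exact walk_snoc w (eRL j)
    · show HasWalk E _ _ (min (i - j).val ((j - i).val + 2))
      rcases le_total (i - j).val ((j - i).val + 2) with h | h
      · rw [min_eq_left h]
        have w := uwalk i (i - j).val
        rwa [show i - (((i - j).val : ℕ) : Fin n) = j by
          rw [Fin.cast_val_eq_self]; ring] at w
      · rw [min_eq_right h]
        have w := vwalk i (j - i).val
        rw [show i + (((j - i).val : ℕ) : Fin n) = j by
          rw [Fin.cast_val_eq_self]; ring] at w
        exact walk_cons (eRL i) (walk_snoc w (eLR j))
  -- step inequality
  have Dstep : ∀ x y z, E y z → Dfun n x z ≤ Dfun n x y + 1 := by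
    rintro (i | i) (a | a) (b | b) e
    · -- inl a → inl b, b = a + 1
      have hb : b = a + 1 := (hE a b).1.mp e
      show min (b - i).val ((i - b).val + 2) ≤ min (a - i).val ((i - a).val + 2) + 1
      rw [show b - i = (a - i) + 1 by rw [hb]; ring,
        show i - b = -((a - i) + 1) by rw [hb]; ring,
        show i - a = -(a - i) by ring]
      exact keyG1 _
    · -- inl a → inr b, a = b
      have hb : a = b := (hE a b).2.2.1.mp e
      subst hb
      show min (a - i).val (i - a).val + 1 ≤ min (a - i).val ((i - a).val + 2) + 1
      omega
    · -- inr a → inl b, a = b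
      have hb : a = b := (hE a b).2.2.2.mp e
      subst hb
      show min (a - i).val ((i - a).val + 2) ≤ (min (a - i).val (i - a).val + 1) + 1
      omega
    · -- inr a → inr b, a = b + 1
      have hb : a = b + 1 := (hE a b).2.1.mp e
      show min (b - i).val (i - b).val + 1 ≤ (min (a - i).val (i - a).val + 1) + 1
      rw [show a - i = (b - i) + 1 by rw [hb]; ring,
        show i - a = -((b - i) + 1) by rw [hb]; ring,
        show i - b = -(b - i) by ring]
      have := keyG2 (b - i)
      omega
    · have hb : b = a + 1 := (hE a b).1.mp e
      show min (b - i).val (i - b).val + 1 ≤ (min (a - i).val (i - a).val + 1) + 1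
      rw [show b - i = (a - i) + 1 by rw [hb]; ring,
        show i - b = -((a - i) + 1) by rw [hb]; ring,
        show i - a = -(a - i) by ring]
      have := keyG3 (a - i)
      omega
    · have hb : a = b := (hE a b).2.2.1.mp e
      subst hb
      show min (i - a).val ((a - i).val + 2) ≤ (min (a - i).val (i - a).val + 1) + 1
      omega
    · have hb : a = b := (hE a b).2.2.2.mp e
      subst hb
      show min (a - i).val (i - a).val + 1 ≤ min (i - a).val ((a - i).val + 2) + 1
      omega
    · have hb : a = b + 1 := (hE a b).2.1.mp e
      show min (i - b).val ((b - i).val + 2) ≤ min (i - a).val ((a - i).val + 2) + 1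
      rw [show i - b = (i - a) + 1 by rw [hb]; ring,
        show b - i = -((i - a) + 1) by rw [hb]; ring,
        show a - i = -(i - a) by ring]
      exact keyG1 _
  -- lower bound on walks
  have Dzero : ∀ x, Dfun n x x = 0 := by
    rintro (i | i) <;> simp [Dfun]
  have Dle : ∀ (m : ℕ) x y, HasWalk E x y m → Dfun n x y ≤ m := by
    intro m
    induction m with
    | zero => intro x y h; rw [walk_zero h, Dzero]
    | succ m ih =>
      intro x y h
      obtain ⟨w, hw, he⟩ := walk_init h
      calc Dfun n x y ≤ Dfun n x w + 1 := Dstep x w y he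
        _ ≤ m + 1 := by have := ih x w hw; omega
  -- distance equals Dfun
  have hddist : ∀ x y, ddist E x y = Dfun n x y := by
    intro x y
    refine le_antisymm (Nat.sInf_le (exwalk x y)) ?_
    have hmem : ddist E x y ∈ {m : ℕ | HasWalk E x y m} :=
      Nat.sInf_mem ⟨_, exwalk x y⟩
    exact Dle _ x y hmem
  refine ⟨?_, fun x y => ⟨Dfun n x y, exwalk x y⟩, ?_⟩
  · -- regularity
    rintro (a | a)
    · constructor
      · show ({y | E (Sum.inl a) y}).ncard = 2
        have : {y | E (Sum.inl a) y} = {Sum.inl (a+1), Sum.inr a} := by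
          ext y
          rcases y with b | b
          · simp [(hE a b).1]
          · simp [(hE a b).2.2.1, eq_comm]
        rw [this, Set.ncard_pair (by simp)]
      · show ({y | E y (Sum.inl a)}).ncard = 2
        have : {y | E y (Sum.inl a)} = {Sum.inl (a-1), Sum.inr a} := by
          ext y
          rcases y with b | b
          · simp only [Set.mem_setOf_eq, Set.mem_insert_iff, Set.mem_singleton_iff,
              Sum.inl.injEq, reduceCtorEq, or_false]
            rw [(hE b a).1]
            constructor
            · intro h; rw [h]; ring
            · intro h; rw [h]; ring
          · simp only [Set.mem_setOf_eq, Set.mem_insert_iff, Set.mem_singleton_iff,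
              Sum.inr.injEq, reduceCtorEq, false_or]
            rw [(hE b a).2.2.2]
        rw [this, Set.ncard_pair (by simp)]
    · constructor
      · show ({y | E (Sum.inr a) y}).ncard = 2
        have : {y | E (Sum.inr a) y} = {Sum.inr (a-1), Sum.inl a} := by
          ext y
          rcases y with b | b
          · simp only [Set.mem_setOf_eq, Set.mem_insert_iff, Set.mem_singleton_iff,
              Sum.inl.injEq, reduceCtorEq, false_or]
            rw [(hE a b).2.2.2]; exact eq_comm
          · simp only [Set.mem_setOf_eq, Set.mem_insert_iff, Set.mem_singleton_iff,
              Sum.inr.injEq, reduceCtorEq, or_false]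
            rw [(hE a b).2.1]
            constructor
            · intro h; rw [h]; ring
            · intro h; rw [h]; ring
        rw [this, Set.ncard_pair (by simp)]
      · show ({y | E y (Sum.inr a)}).ncard = 2
        have : {y | E y (Sum.inr a)} = {Sum.inr (a+1), Sum.inl a} := by
          ext y
          rcases y with b | b
          · simp only [Set.mem_setOf_eq, Set.mem_insert_iff, Set.mem_singleton_iff,
              Sum.inl.injEq, reduceCtorEq, false_or]
            rw [(hE b a).2.2.1]
          · simp only [Set.mem_setOf_eq, Set.mem_insert_iff, Set.mem_singleton_iff,
              Sum.inr.injEq, reduceCtorEq, or_false]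
            rw [(hE b a).2.1]
        rw [this, Set.ncard_pair (by simp)]
  · -- diameter
    refine le_antisymm (Finset.sup_le ?_) ?_
    · rintro ⟨x, y⟩ _
      rw [hddist]
      rcases x with i | i <;> rcases y with j | j
      · show min (j - i).val ((i - j).val + 2) ≤ n / 2 + 1
        rw [show i - j = -(j - i) by ring]
        exact boundD1 _
      · show min (j - i).val (i - j).val + 1 ≤ n / 2 + 1
        rw [show i - j = -(j - i) by ring]
        exact boundD2 _
      · show min (j - i).val (i - j).val + 1 ≤ n / 2 + 1
        rw [show i - j = -(j - i) by ring]
        exact boundD2 _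
      · show min (i - j).val ((j - i).val + 2) ≤ n / 2 + 1
        rw [show j - i = -(i - j) by ring]
        exact boundD1 _
    · set j₀ : Fin n := ⟨n / 2, by omega⟩ with hj₀
      have hval : Dfun n (Sum.inl 0) (Sum.inr j₀) = n / 2 + 1 := by
        show min (j₀ - 0).val (0 - j₀).val + 1 = n / 2 + 1
        rw [show j₀ - 0 = j₀ by ring, show (0 : Fin n) - j₀ = -j₀ by ring, neg_val]
        have : j₀.val = n / 2 := rfl
        rw [this]
        split <;> omega
      calc n / 2 + 1 = ddist E (Sum.inl 0) (Sum.inr j₀) := by rw [hddist, hval]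
        _ ≤ diam E := by
          unfold diam
          exact Finset.le_sup
            (f := fun p : (Fin n ⊕ Fin n) × (Fin n ⊕ Fin n) => ddist E p.1 p.2)
            (Finset.mem_univ (Sum.inl 0, Sum.inr j₀))

end PaperDRD
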